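/- Let (Ω, F, P) be a probability space, u > 0, and for each ω let T(ω) : ℕ → ℝ and R(ω) : ℝ → ℝ be such that almost surely: T(ω)(0) = 0, T(ω) is strictly increasing with T(ω)(n) → ∞, R(ω)(0) = u, for every k ≥ 1 the function R(ω) is monotone (nondecreasing or nonincreasing) on [T(ω)(k−1), T(ω)(k)), and R(ω)(T(ω)(k)) ≤ limsup_{t → T(ω)(k)⁻} R(ω)(t). Assume the maps U_k(ω) := R(ω)(T(ω)(k)) are measurable, U_0 = u, and the random variables Y_k := U_{k−1} − U_k (k ≥ 1) are mutually independent. Then the ruin event {ω : ∃ t ≥ 0, R(ω)(t) < 0} coincides almost surely with the event {sup_{k≥1} S_k > u} where S_k = Y_1 + ⋯ + Y_k, and for every h ≥ 0 its probability is at most e^{−hu} · sup_{k≥1} ∏_{j=1}^{k} E[e^{h Y_j}]. -/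

import Mathlib

open MeasureTheory ProbabilityTheory Filter
open scoped ENNReal

lemma stmt7_path (u : ℝ) (hu : 0 < u) (T : ℕ → ℝ) (R : ℝ → ℝ)
    (hT0 : T 0 = 0) (hTm : StrictMono T) (hTt : Tendsto T atTop atTop)
    (hR0 : R 0 = u)
    (hmono : ∀ k : ℕ, MonotoneOn R (Set.Ico (T k) (T (k + 1))) ∨
      AntitoneOn R (Set.Ico (T k) (T (k + 1))))
    (hjump : ∀ k : ℕ, (R (T (k + 1)) : EReal) ≤
      Filter.limsup (fun t => (R t : EReal)) (nhdsWithin (T (k + 1)) (Set.Iio (T (k + 1))))) :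
    (∃ t : ℝ, 0 ≤ t ∧ R t < 0) ↔ ∃ k : ℕ, R (T (k + 1)) < 0 := by
  classical
  constructor
  · rintro ⟨t, ht0, htneg⟩
    have hex : ∃ n, t < T n := (hTt.eventually_gt_atTop t).exists
    have hfind0 : Nat.find hex ≠ 0 := by
      intro h0
      have := Nat.find_spec hex
      rw [h0, hT0] at this
      linarith
    obtain ⟨k, hk⟩ := Nat.exists_eq_succ_of_ne_zero hfind0
    have htlt : t < T (k + 1) := by have := Nat.find_spec hex; rwa [hk] at this
    have htge : T k ≤ t := le_of_not_gt (Nat.find_min hex (by omega))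
    have htmem : t ∈ Set.Ico (T k) (T (k + 1)) := ⟨htge, htlt⟩
    have hTkmem : T k ∈ Set.Ico (T k) (T (k + 1)) := ⟨le_rfl, hTm (lt_add_one k)⟩
    rcases hmono k with hm | hm
    · have hle : R (T k) ≤ R t := hm hTkmem htmem htge
      cases k with
      | zero =>
        rw [hT0, hR0] at hle
        linarith
      | succ m => exact ⟨m, lt_of_le_of_lt hle htneg⟩
    · have hev : ∀ᶠ s in nhdsWithin (T (k + 1)) (Set.Iio (T (k + 1))),
          (R s : EReal) ≤ (R t : EReal) := by
        filter_upwards [Ioo_mem_nhdsLT_of_mem (⟨htlt, le_rfl⟩ : T (k+1) ∈ Set.Ioc t (T (k+1)))]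
          with s hs
        exact_mod_cast hm htmem ⟨le_trans htge hs.1.le, hs.2⟩ hs.1.le
      have hls : Filter.limsup (fun s => (R s : EReal))
          (nhdsWithin (T (k + 1)) (Set.Iio (T (k + 1)))) ≤ (R t : EReal) :=
        Filter.limsup_le_of_le (by isBoundedDefault) hev
      have : (R (T (k + 1)) : EReal) ≤ (R t : EReal) := le_trans (hjump k) hls
      exact ⟨k, lt_of_le_of_lt (by exact_mod_cast this) htneg⟩
  · rintro ⟨k, hk⟩
    refine ⟨T (k + 1), ?_, hk⟩
    have : T 0 < T (k + 1) := hTm (Nat.succ_pos k)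
    rw [hT0] at this
    exact this.le

/-- Theorem 1 for the general risk reserve process.
Almost surely the path `R ω` starts at `u`, is monotone between the successive
jump times `T ω k` (with `T ω 0 = 0`, strictly increasing, tending to `∞`) and
may jump down only at those times (`R ω (T ω (k+1)) ≤ limsup_{t → T ω (k+1)⁻} R ω t`,
limsup in the extended reals).  With `U k ω = R ω (T ω k)` measurable, `U 0 = u`
a.s., and the increments `Y k = U k − U (k+1)` (representing `Y_{k+1} = U_k − U_{k+1}`)
mutually independent, the ruin event `{∃ t ≥ 0, R ω t < 0}` coincides a.s. with
`{sup_{k≥1} S_k > u}` where `S k = ∑_{j<k} Y j`, and for every `h ≥ 0` its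
probability is at most `e^{-h u} · sup_{k≥1} ∏_{j=1}^k E[e^{h Y_j}]`. -/
theorem stmt7 {Ω : Type*} [MeasurableSpace Ω] (P : Measure Ω) [IsProbabilityMeasure P]
    (u : ℝ) (hu : 0 < u)
    (T : Ω → ℕ → ℝ) (R : Ω → ℝ → ℝ)
    (hae : ∀ᵐ ω ∂P,
      T ω 0 = 0 ∧ StrictMono (T ω) ∧ Tendsto (T ω) atTop atTop ∧
      R ω 0 = u ∧
      (∀ k : ℕ, MonotoneOn (R ω) (Set.Ico (T ω k) (T ω (k + 1))) ∨
        AntitoneOn (R ω) (Set.Ico (T ω k) (T ω (k + 1)))) ∧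
      (∀ k : ℕ, (R ω (T ω (k + 1)) : EReal) ≤
        Filter.limsup (fun t => (R ω t : EReal))
          (nhdsWithin (T ω (k + 1)) (Set.Iio (T ω (k + 1))))))
    (U : ℕ → Ω → ℝ) (hU : ∀ k ω, U k ω = R ω (T ω k))
    (hUmeas : ∀ k, Measurable (U k))
    (hU0 : ∀ᵐ ω ∂P, U 0 ω = u)
    (Y : ℕ → Ω → ℝ) (hY : ∀ k ω, Y k ω = U k ω - U (k + 1) ω)
    (hindep : iIndepFun Y P)
    (S : ℕ → Ω → ℝ) (hS : ∀ k ω, S k ω = ∑ j ∈ Finset.range k, Y j ω) :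
    {ω | ∃ t : ℝ, 0 ≤ t ∧ R ω t < 0} =ᵐ[P] (⋃ k : ℕ, {ω | u < S (k + 1) ω}) ∧
    ∀ h : ℝ, 0 ≤ h →
      P {ω | ∃ t : ℝ, 0 ≤ t ∧ R ω t < 0} ≤
        ENNReal.ofReal (Real.exp (-h * u)) *
          ⨆ k : ℕ, ∏ j ∈ Finset.range (k + 1),
            ∫⁻ ω, ENNReal.ofReal (Real.exp (h * Y j ω)) ∂P := by
  classical
  have hYmeas : ∀ i, Measurable (Y i) := fun i => by
    have : Y i = fun ω => U i ω - U (i + 1) ω := funext (hY i)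
    rw [this]; exact (hUmeas i).sub (hUmeas (i + 1))
  have hSmeas : ∀ k, Measurable (S k) := fun k => by
    have : S k = fun ω => ∑ j ∈ Finset.range k, Y j ω := funext (hS k)
    rw [this]; exact Finset.measurable_sum _ fun j _ => hYmeas j
  -- a.e. equality of events
  have hiff : ∀ᵐ ω ∂P, (∃ t, 0 ≤ t ∧ R ω t < 0) ↔ (∃ k, u < S (k + 1) ω) := by
    filter_upwards [hae, hU0] with ω hω hU0ω
    obtain ⟨hT0, hTm, hTt, hR0, hmono, hjump⟩ := hω
    have key := stmt7_path u hu (T ω) (R ω) hT0 hTm hTt hR0 hmono hjump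
    have hSval : ∀ k : ℕ, S (k + 1) ω = u - R ω (T ω (k + 1)) := by
      intro k
      rw [hS]
      simp only [hY]
      rw [Finset.sum_range_sub' (fun j => U j ω), hU (k + 1), hU0ω]
    rw [key]
    constructor
    · rintro ⟨k, hk⟩; exact ⟨k, by rw [hSval k]; linarith⟩
    · rintro ⟨k, hk⟩; rw [hSval k] at hk; exact ⟨k, by linarith⟩
  have hsetEq : {ω | ∃ t : ℝ, 0 ≤ t ∧ R ω t < 0} =ᵐ[P] ⋃ k : ℕ, {ω | u < S (k + 1) ω} := by
    apply Filter.eventuallyEq_set.2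
    filter_upwards [hiff] with ω hω
    simpa only [Set.mem_setOf_eq, Set.mem_iUnion] using hω
  refine ⟨hsetEq, fun h hh => ?_⟩
  rw [measure_congr hsetEq]
  set a : ℕ → ℝ≥0∞ := fun j => ∫⁻ ω, ENNReal.ofReal (Real.exp (h * Y j ω)) ∂P with ha
  set Csup : ℝ≥0∞ := ⨆ k : ℕ, ∏ j ∈ Finset.range (k + 1), a j with hCsupdef
  have hexp_ne : ∀ x : ℝ, ENNReal.ofReal (Real.exp x) ≠ 0 :=
    fun x => (ENNReal.ofReal_pos.2 (Real.exp_pos x)).ne'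
  by_cases htop : Csup = ∞
  · rw [htop, ENNReal.mul_top (hexp_ne _)]
    exact le_top
  -- main case
  set Φ : ℕ → Ω → ℝ≥0∞ := fun i ω => ENNReal.ofReal (Real.exp (h * Y i ω)) with hΦ
  have hΦmeas : ∀ i, Measurable (Φ i) := fun i =>
    ENNReal.measurable_ofReal.comp (Real.measurable_exp.comp ((hYmeas i).const_mul h))
  set M : ℕ → MeasurableSpace Ω :=
    fun n => ⨆ i ∈ Set.Iio n, MeasurableSpace.comap (Y i) inferInstance with hM
  have hM_le : ∀ n, M n ≤ ‹MeasurableSpace Ω› :=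
    fun n => iSup₂_le fun i _ => measurable_iff_comap_le.1 (hYmeas i)
  have hMmono : ∀ {n m : ℕ}, n ≤ m → M n ≤ M m := by
    intro n m hnm
    exact iSup₂_le fun i hi => le_iSup₂ (f := fun i (_ : i ∈ Set.Iio m) => MeasurableSpace.comap (Y i) inferInstance) i (lt_of_lt_of_le hi hnm)
  have hYM : ∀ {i n : ℕ}, i < n → Measurable[M n] (Y i) := by
    intro i n hi
    exact measurable_iff_comap_le.2 (le_iSup₂ (f := fun i (_ : i ∈ Set.Iio n) => MeasurableSpace.comap (Y i) inferInstance) i hi)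
  have hΦM : ∀ {i n : ℕ}, i < n → Measurable[M n] (Φ i) := fun hi =>
    ENNReal.measurable_ofReal.comp (Real.measurable_exp.comp ((hYM hi).const_mul h))
  -- Key independence identity
  have L1 : ∀ (m n : ℕ) (f : Ω → ℝ≥0∞), Measurable[M n] f →
      ∫⁻ ω, f ω * ∏ i ∈ Finset.Ico n m, Φ i ω ∂P =
        (∫⁻ ω, f ω ∂P) * ∏ i ∈ Finset.Ico n m, a i := by
    intro m
    induction m with
    | zero =>
      intro n f hf
      rw [Finset.Ico_eq_empty (by omega)]
      simp
    | succ m ih =>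
      intro n f hf
      by_cases hnm : n ≤ m
      · have hgmeas : Measurable[M m] (fun ω => f ω * ∏ i ∈ Finset.Ico n m, Φ i ω) :=
          (hf.mono (hMmono hnm) le_rfl).mul
            (Finset.measurable_prod _ fun i hi => hΦM (Finset.mem_Ico.1 hi).2)
        have hindep_m : Indep (M m) (MeasurableSpace.comap (Y m) inferInstance) P := by
          have hd : Disjoint (Set.Iio m) ({m} : Set ℕ) := by
            simp [Set.disjoint_singleton_right]
          have := indep_iSup_of_disjoint
            (fun i => measurable_iff_comap_le.1 (hYmeas i)) hindep.iIndep hd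
          simpa [hM] using this
        have hΦm_meas : Measurable[MeasurableSpace.comap (Y m) inferInstance] (Φ m) :=
          ENNReal.measurable_ofReal.comp
            (Real.measurable_exp.comp ((Measurable.of_comap_le le_rfl).const_mul h))
        calc ∫⁻ ω, f ω * ∏ i ∈ Finset.Ico n (m + 1), Φ i ω ∂P
            = ∫⁻ ω, (f ω * ∏ i ∈ Finset.Ico n m, Φ i ω) * Φ m ω ∂P := by
              congr 1; funext ω
              rw [Finset.prod_Ico_succ_top hnm, mul_assoc]
          _ = (∫⁻ ω, f ω * ∏ i ∈ Finset.Ico n m, Φ i ω ∂P) * ∫⁻ ω, Φ m ω ∂P :=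
              lintegral_mul_eq_lintegral_mul_lintegral_of_independent_measurableSpace
                (hM_le m) (measurable_iff_comap_le.1 (hYmeas m)) hindep_m hgmeas hΦm_meas
          _ = ((∫⁻ ω, f ω ∂P) * ∏ i ∈ Finset.Ico n m, a i) * a m := by rw [ih n f hf]
          _ = (∫⁻ ω, f ω ∂P) * ∏ i ∈ Finset.Ico n (m + 1), a i := by
              rw [Finset.prod_Ico_succ_top hnm, mul_assoc]
      · rw [Finset.Ico_eq_empty (by omega)]
        simp
  -- the events
  set B : ℕ → Set Ω := fun j => {ω | u < S (j + 1) ω} with hB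
  set A : ℕ → Set Ω := fun j => B j \ ⋃ i ∈ Set.Iio j, B i with hA
  have hSM : ∀ {k n : ℕ}, k ≤ n → Measurable[M n] (S k) := by
    intro k n hk
    have hSk : S k = fun ω => ∑ j ∈ Finset.range k, Y j ω := funext (hS k)
    rw [hSk]
    exact Finset.measurable_sum _ fun j hj => hYM (by have := Finset.mem_range.1 hj; omega)
  have hBM : ∀ {i n : ℕ}, i < n → MeasurableSet[M n] (B i) := by
    intro i n hi
    exact measurableSet_lt measurable_const (hSM (by omega))
  have hAM : ∀ j, MeasurableSet[M (j + 1)] (A j) := fun j =>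
    (hBM (lt_add_one j)).diff
      (MeasurableSet.biUnion (Set.to_countable _)
        fun i hi => hBM (lt_trans hi (lt_add_one j)))
  have hAmeas : ∀ j, MeasurableSet (A j) := fun j => hM_le (j + 1) _ (hAM j)
  have hABunion : ⋃ j, B j = ⋃ j, A j := by
    ext ω
    simp only [Set.mem_iUnion]
    constructor
    · rintro ⟨k, hk⟩
      have hex2 : ∃ j, ω ∈ B j := ⟨k, hk⟩
      refine ⟨Nat.find hex2, Nat.find_spec hex2, ?_⟩
      simp only [Set.mem_iUnion, Set.mem_Iio, not_exists]
      exact fun i hi => Nat.find_min hex2 hi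
    · rintro ⟨j, hj⟩
      exact ⟨j, hj.1⟩
  have hApd : ∀ s : Finset ℕ, Set.PairwiseDisjoint (↑s : Set ℕ) A := by
    intro s i _ j _ hij
    apply Set.disjoint_left.2
    intro ω hωi hωj
    rcases lt_or_gt_of_ne hij with hlt | hlt
    · exact hωj.2 (Set.mem_biUnion hlt hωi.1)
    · exact hωi.2 (Set.mem_biUnion hlt hωj.1)
  have haΦ : ∀ i, a i = ∫⁻ ω, Φ i ω ∂P := fun i => rfl
  have hΦprod : ∀ (n : ℕ) (ω : Ω), ∏ i ∈ Finset.range n, Φ i ω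
      = ENNReal.ofReal (Real.exp (h * S n ω)) := by
    intro n ω
    simp only [hΦ]
    rw [hS, Finset.mul_sum, Real.exp_sum,
      ENNReal.ofReal_prod_of_nonneg fun i _ => (Real.exp_pos _).le]
  have hCint : ∀ k : ℕ, ∫⁻ ω, ∏ i ∈ Finset.range (k + 1), Φ i ω ∂P
      = ∏ i ∈ Finset.range (k + 1), a i := by
    intro k
    have h1 := L1 (k + 1) 0 (fun _ => 1) measurable_const
    simp only [one_mul, lintegral_one, measure_univ] at h1
    rw [Finset.range_eq_Ico]
    exact h1
  have key1 : ∀ k j : ℕ, j ≤ k →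
      ENNReal.ofReal (Real.exp (h * u)) * P (A j) * ∏ i ∈ Finset.Ico (j + 1) (k + 1), a i ≤
        ∫⁻ ω in A j, ∏ i ∈ Finset.range (k + 1), Φ i ω ∂P := by
    intro k j hjk
    set f : Ω → ℝ≥0∞ := (A j).indicator (fun ω => ∏ i ∈ Finset.range (j + 1), Φ i ω) with hf
    have hfmeas : Measurable[M (j + 1)] f :=
      (Finset.measurable_prod _ fun i hi => hΦM (Finset.mem_range.1 hi)).indicator (hAM j)
    have hsplit : ∫⁻ ω in A j, ∏ i ∈ Finset.range (k + 1), Φ i ω ∂P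
        = (∫⁻ ω, f ω ∂P) * ∏ i ∈ Finset.Ico (j + 1) (k + 1), a i := by
      rw [← lintegral_indicator (hAmeas j), ← L1 (k + 1) (j + 1) f hfmeas]
      congr 1
      funext ω
      by_cases hω : ω ∈ A j
      · simp only [hf, Set.indicator_of_mem hω]
        rw [Finset.range_eq_Ico, ← Finset.prod_Ico_consecutive _ (Nat.zero_le (j + 1)) (by omega),
          Finset.range_eq_Ico]
      · simp [hf, Set.indicator_of_notMem hω]
    rw [hsplit]
    apply mul_le_mul_left
    have hpoint : (A j).indicator (fun _ => ENNReal.ofReal (Real.exp (h * u))) ≤ f := by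
      intro ω
      by_cases hω : ω ∈ A j
      · simp only [hf, Set.indicator_of_mem hω]
        rw [hΦprod (j + 1) ω]
        apply ENNReal.ofReal_le_ofReal
        apply Real.exp_le_exp.2
        have hub : u < S (j + 1) ω := hω.1
        nlinarith
      · simp [hf, Set.indicator_of_notMem hω]
    calc ENNReal.ofReal (Real.exp (h * u)) * P (A j)
        = ∫⁻ ω, (A j).indicator (fun _ => ENNReal.ofReal (Real.exp (h * u))) ω ∂P :=
          (lintegral_indicator_const (hAmeas j) _).symm
      _ ≤ ∫⁻ ω, f ω ∂P := lintegral_mono hpoint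
  have key2 : ∀ k : ℕ,
      ∑ j ∈ Finset.range (k + 1), ∫⁻ ω in A j, ∏ i ∈ Finset.range (k + 1), Φ i ω ∂P
      ≤ ∏ i ∈ Finset.range (k + 1), a i := by
    intro k
    rw [← lintegral_biUnion_finset (hApd _) (fun b _ => hAmeas b), ← hCint k]
    exact lintegral_mono' Measure.restrict_le_self le_rfl
  have haprod_le : ∀ k, (∏ i ∈ Finset.range (k + 1), a i) ≤ Csup :=
    fun k => le_iSup (fun k => ∏ j ∈ Finset.range (k + 1), a j) k
  have ha_ne_zero : ∀ i, a i ≠ 0 := by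
    intro i hz
    rw [haΦ i, lintegral_eq_zero_iff (hΦmeas i)] at hz
    haveI : (ae P).NeBot := ae_neBot.2 (IsProbabilityMeasure.ne_zero P)
    obtain ⟨ω, hω⟩ := hz.exists
    simp only [hΦ, Pi.zero_apply] at hω
    exact hexp_ne _ hω
  have hCk_ne_zero : ∀ k, (∏ i ∈ Finset.range (k + 1), a i) ≠ 0 :=
    fun k => Finset.prod_ne_zero_iff.2 fun i _ => ha_ne_zero i
  have hCk_ne_top : ∀ k, (∏ i ∈ Finset.range (k + 1), a i) ≠ ∞ :=
    fun k => ne_top_of_le_ne_top htop (haprod_le k)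
  have main : ∀ k : ℕ, ∑ j ∈ Finset.range (k + 1), P (A j) ≤
      ENNReal.ofReal (Real.exp (-h * u)) * Csup := by
    intro k
    set C : ℝ≥0∞ := ∏ i ∈ Finset.range (k + 1), a i with hC
    have step1 : ENNReal.ofReal (Real.exp (h * u)) * (∑ j ∈ Finset.range (k + 1), P (A j)) * C
        ≤ Csup * C := by
      calc ENNReal.ofReal (Real.exp (h * u)) * (∑ j ∈ Finset.range (k + 1), P (A j)) * C
          = ∑ j ∈ Finset.range (k + 1), ENNReal.ofReal (Real.exp (h * u)) * P (A j) * C := by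
            rw [Finset.mul_sum, Finset.sum_mul]
        _ ≤ ∑ j ∈ Finset.range (k + 1),
              Csup * ∫⁻ ω in A j, ∏ i ∈ Finset.range (k + 1), Φ i ω ∂P := by
            apply Finset.sum_le_sum
            intro j hj
            have hjk : j ≤ k := by have := Finset.mem_range.1 hj; omega
            have hsplitC : C = (∏ i ∈ Finset.range (j + 1), a i) *
                ∏ i ∈ Finset.Ico (j + 1) (k + 1), a i := by
              rw [hC, Finset.range_eq_Ico, Finset.range_eq_Ico]
              exact (Finset.prod_Ico_consecutive _ (Nat.zero_le (j + 1)) (show j + 1 ≤ k + 1 by omega)).symm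
            calc ENNReal.ofReal (Real.exp (h * u)) * P (A j) * C
                = (∏ i ∈ Finset.range (j + 1), a i) *
                  (ENNReal.ofReal (Real.exp (h * u)) * P (A j) *
                    ∏ i ∈ Finset.Ico (j + 1) (k + 1), a i) := by
                  rw [hsplitC]; ring
              _ ≤ Csup * ∫⁻ ω in A j, ∏ i ∈ Finset.range (k + 1), Φ i ω ∂P :=
                  mul_le_mul' (haprod_le j) (key1 k j hjk)
        _ = Csup * ∑ j ∈ Finset.range (k + 1),
              ∫⁻ ω in A j, ∏ i ∈ Finset.range (k + 1), Φ i ω ∂P := by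
            rw [Finset.mul_sum]
        _ ≤ Csup * C := mul_le_mul_right (key2 k) _
    have step2 : ENNReal.ofReal (Real.exp (h * u)) * (∑ j ∈ Finset.range (k + 1), P (A j))
        ≤ Csup := (ENNReal.mul_le_mul_iff_left (hCk_ne_zero k) (hCk_ne_top k)).1 step1
    have step3 := mul_le_mul_right step2 (ENNReal.ofReal (Real.exp (-h * u)))
    rwa [← mul_assoc, ← ENNReal.ofReal_mul (Real.exp_nonneg _), ← Real.exp_add,
      (by ring : -h * u + h * u = 0), Real.exp_zero, ENNReal.ofReal_one, one_mul] at step3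
  calc P (⋃ k, B k) = P (⋃ j, A j) := by rw [hABunion]
    _ ≤ ∑' j, P (A j) := measure_iUnion_le A
    _ = ⨆ n, ∑ j ∈ Finset.range n, P (A j) := ENNReal.tsum_eq_iSup_nat
    _ ≤ ENNReal.ofReal (Real.exp (-h * u)) * Csup := by
        apply iSup_le
        intro n
        cases n with
        | zero => simp
        | succ k => exact main k
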